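/- Under the non-degeneracy condition, the Verlinde formula holds: N_{λ,μ}^ν = Σ_ρ S_{λ,ρ} S_{μ,ρ} (S_{ν,ρ})* / S_{0,ρ}, where S = w^{-1/2} Y. -/

import Mathlib

/-- Under the non-degeneracy condition the Verlinde formula holds:
`N_{λ,μ}^ν = ∑_ρ S_{λ,ρ} S_{μ,ρ} (S_{ν,ρ})* / S_{0,ρ}`, where `S = w^{-1/2} Y`. -/
theorem Verlinde_formula
    {Δ : Type*} [Fintype Δ] [DecidableEq Δ] (z0 : Δ) (bar : Δ → Δ)
    (Nc : Δ → Δ → Δ → ℕ) (d : Δ → ℝ) (ω : Δ → ℂ) (Y : Δ → Δ → ℂ)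
    (hNcomm : ∀ l m n, Nc l m n = Nc m l n)
    (hNid : ∀ l m, Nc z0 l m = if l = m then 1 else 0)
    (hFrob : ∀ l m n, Nc l m n = Nc (bar l) n m ∧ Nc l m n = Nc n (bar m) l)
    (hassoc : ∀ l n r s, ∑ m, Nc l m n * Nc r s m = ∑ t, Nc l r t * Nc t s n)
    (hd : ∀ l, 0 < d l) (hd0 : d z0 = 1) (hdbar : ∀ l, d (bar l) = d l)
    (hdim : ∀ l m, ∑ n, (Nc l m n : ℝ) * d n = d l * d m)
    (hω : ∀ l, ‖ω l‖ = 1)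
    (hY : ∀ m n, Y m n = ∑ l, (ω m * ω n / ω l) * (Nc m n l : ℂ) * (d l : ℂ))
    (hYsym : ∀ l m, Y l m = Y m l)
    (hYconj : ∀ l m, star (Y (bar l) m) = Y l m)
    (hY0 : ∀ m, Y z0 m = (d m : ℂ))
    (hYprod : ∀ n m r, Y n r * Y m r = (d r : ℂ) * ∑ l, (Nc m n l : ℂ) * Y r l)
    (hnondeg : ∀ l, ∑ m, star (Y l m) * (d m : ℂ) =
      if l = z0 then ((∑ n, d n ^ 2 : ℝ) : ℂ) else 0) :
    let S : Δ → Δ → ℂ :=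
      fun l m => Y l m / ((Real.sqrt (∑ n, d n ^ 2) : ℝ) : ℂ)
    ∀ l m n, (Nc l m n : ℂ) = ∑ r, S l r * S m r * star (S n r) / S z0 r := by
  intro S l m n
  set w : ℝ := ∑ n, d n ^ 2 with hwdef
  have hwpos : 0 < w := by
    apply Finset.sum_pos' (fun i _ => sq_nonneg _)
    exact ⟨z0, Finset.mem_univ _, by rw [hd0]; norm_num⟩
  have hsw : (0:ℝ) < Real.sqrt w := Real.sqrt_pos.mpr hwpos
  have hswC : ((Real.sqrt w : ℝ) : ℂ) ≠ 0 := by exact_mod_cast hsw.ne'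
  have hwC : ((w : ℝ) : ℂ) ≠ 0 := by exact_mod_cast hwpos.ne'
  -- bar is an involution
  have hbarbar : ∀ k, bar (bar k) = k := by
    intro k
    have h1 : Nc k z0 k = Nc (bar (bar k)) z0 k := by
      rw [(hFrob k z0 k).1, (hFrob (bar k) k z0).1]
    rw [hNcomm k z0 k, hNid, hNcomm (bar (bar k)) z0 k, hNid] at h1
    simp only [if_pos rfl] at h1
    by_contra hne
    rw [if_neg hne] at h1
    exact one_ne_zero h1
  have hbarz0 : bar z0 = z0 := by
    have h1 : Nc z0 z0 z0 = Nc (bar z0) z0 z0 := (hFrob z0 z0 z0).1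
    rw [hNid, hNcomm (bar z0) z0 z0, hNid] at h1
    simp only [if_pos rfl] at h1
    by_contra hne
    rw [if_neg hne] at h1
    exact one_ne_zero h1
  have hstarY : ∀ k r, star (Y k r) = Y (bar k) r := by
    intro k r
    have := hYconj (bar k) r
    rwa [hbarbar] at this
  -- row sums against dimensions
  have hsumYd : ∀ k, ∑ r, Y k r * (d r : ℂ) = if k = z0 then ((w:ℝ):ℂ) else 0 := by
    intro k
    have h := hnondeg (bar k)
    have hc : (bar k = z0) = (k = z0) := by
      apply propext
      constructor
      · intro h'; rw [← hbarbar k, h', hbarz0]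
      · intro h'; rw [h', hbarz0]
    calc ∑ r, Y k r * (d r : ℂ)
        = ∑ r, star (Y (bar k) r) * (d r : ℂ) :=
          Finset.sum_congr rfl fun r _ => by rw [hstarY (bar k) r, hbarbar]
      _ = if bar k = z0 then ((w:ℝ):ℂ) else 0 := h
      _ = if k = z0 then ((w:ℝ):ℂ) else 0 := by
          by_cases hk : k = z0
          · rw [if_pos hk, if_pos (by rw [hk, hbarz0])]
          · rw [if_neg hk, if_neg (fun hb => hk (hc ▸ hb))]
  -- orthogonality
  have orth : ∀ p t, ∑ r, star (Y p r) * Y t r = if t = p then ((w:ℝ):ℂ) else 0 := by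
    intro p t
    have step1 : ∀ r, star (Y p r) * Y t r
        = ∑ u, (Nc t (bar p) u : ℂ) * (Y u r * (d r : ℂ)) := by
      intro r
      rw [hstarY p r, hYprod (bar p) t r, Finset.mul_sum]
      exact Finset.sum_congr rfl fun u _ => by rw [hYsym r u]; ring
    calc ∑ r, star (Y p r) * Y t r
        = ∑ r, ∑ u, (Nc t (bar p) u : ℂ) * (Y u r * (d r : ℂ)) :=
          Finset.sum_congr rfl fun r _ => step1 r
      _ = ∑ u, (Nc t (bar p) u : ℂ) * ∑ r, Y u r * (d r : ℂ) := by
          rw [Finset.sum_comm]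
          exact Finset.sum_congr rfl fun u _ => by rw [Finset.mul_sum]
      _ = if t = p then ((w:ℝ):ℂ) else 0 := by
          simp only [hsumYd, mul_ite, mul_zero]
          rw [Finset.sum_ite_eq' Finset.univ z0 fun u => (Nc t (bar p) u : ℂ) * ((w:ℝ):ℂ)]
          simp only [Finset.mem_univ, if_true]
          have hfrob2 : Nc t (bar p) z0 = Nc z0 p t := by
            rw [(hFrob t (bar p) z0).2, hbarbar]
          rw [hfrob2, hNid]
          by_cases h : p = t
          · subst h; simp
          · rw [if_neg h, if_neg (Ne.symm h)]; simp
  -- pointwise rewriting of the summand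
  have hsq : ((Real.sqrt w : ℝ):ℂ) * ((Real.sqrt w : ℝ):ℂ) = ((w:ℝ):ℂ) := by
    rw [← Complex.ofReal_mul, Real.mul_self_sqrt hwpos.le]
  have hrw : ∀ r, S l r * S m r * star (S n r) / S z0 r
      = (∑ t, (Nc m l t : ℂ) * (star (Y n r) * Y t r)) / ((w:ℝ):ℂ) := by
    intro r
    have hdr : ((d r : ℝ) : ℂ) ≠ 0 := by exact_mod_cast (hd r).ne'
    have hprod : Y l r * Y m r = (d r:ℂ) * ∑ t, (Nc m l t : ℂ) * Y t r := by
      rw [hYprod l m r]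
      exact congrArg _ (Finset.sum_congr rfl fun t _ => by rw [hYsym r t])
    have hstarS : star (S n r) = star (Y n r) / ((Real.sqrt w : ℝ):ℂ) := by
      simp [S, star_div₀, Complex.star_def, Complex.conj_ofReal, hwdef]
    simp only [S, hstarS, hY0]
    rw [div_eq_div_iff (div_ne_zero hdr hswC) hwC]
    field_simp
    rw [← hwdef, hprod]
    simp only [Finset.mul_sum, Finset.sum_mul]
    rw [sq, hsq, Finset.sum_div]
    exact Finset.sum_congr rfl fun t _ => by rw [mul_div_cancel_right₀ _ hwC]; ring
  calc (Nc l m n : ℂ) = (Nc m l n : ℂ) * ((w:ℝ):ℂ) / ((w:ℝ):ℂ) := by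
        rw [mul_div_cancel_right₀ _ hwC, hNcomm]
    _ = ∑ r, S l r * S m r * star (S n r) / S z0 r := by
        rw [Finset.sum_congr rfl fun r _ => hrw r, ← Finset.sum_div]
        congr 1
        rw [Finset.sum_comm]
        symm
        calc ∑ t, ∑ r, (Nc m l t : ℂ) * (star (Y n r) * Y t r)
            = ∑ t, (Nc m l t : ℂ) * (if t = n then ((w:ℝ):ℂ) else 0) := by
              refine Finset.sum_congr rfl fun t _ => ?_
              rw [← Finset.mul_sum, orth n t]
          _ = (Nc m l n : ℂ) * ((w:ℝ):ℂ) := by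
              simp only [mul_ite, mul_zero]
              rw [Finset.sum_ite_eq' Finset.univ n fun t => (Nc m l t : ℂ) * ((w:ℝ):ℂ)]
              simp
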